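/- Let c : ℕ → (Fin n → ℝ) be m-periodic such that any n vectors among c(0),…,c(m-1) span ℝⁿ, and suppose m < n * gcd(m,p) with gcd(m,p) > 1. Then there exist two distinct p-periodic signals x, x' : ℕ → (Fin n → ℝ) inducing the same compressed signal y(t) = ⟨c(t), x(t)⟩, i.e., the compression is not lossless. -/

import Mathlib

theorem stmt5 (n m p : ℕ) (hn : 0 < n) (hm : 0 < m) (hp : 0 < p) (hmn : n ≤ m)
    (c : ℕ → Fin n → ℝ) (hc : ∀ t, c (t + m) = c t)
    (hrich : ∀ T : Finset (Fin m), T.card = n →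
      Submodule.span ℝ ((fun t : Fin m => c t) '' (T : Set (Fin m))) = ⊤)
    (hgcd : m < n * Nat.gcd m p) (hd : 1 < Nat.gcd m p) :
    ∃ x x' : ℕ → Fin n → ℝ,
      (∀ t, x (t + p) = x t) ∧ (∀ t, x' (t + p) = x' t) ∧ x ≠ x' ∧
      ∀ t, ∑ i, c t i * x t i = ∑ i, c t i * x' t i := by
  set d := Nat.gcd m p with hdef
  have hd0 : 0 < d := lt_trans one_pos hd
  have hdm : d ∣ m := Nat.gcd_dvd_left m p
  have hdp : d ∣ p := Nat.gcd_dvd_right m p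
  set q := m / d with hq
  have hqd : q * d = m := Nat.div_mul_cancel hdm
  have hqn : q < n := by
    by_contra h
    push_neg at h
    have : n * d ≤ q * d := Nat.mul_le_mul_right d h
    omega
  -- matrix of the constrained rows
  set M : Matrix (Fin q) (Fin n) ℝ := fun k i => c (k * d) i with hM
  have hker : LinearMap.ker M.mulVecLin ≠ ⊥ := by
    apply LinearMap.ker_ne_bot_of_finrank_lt
    simpa using hqn
  obtain ⟨v, hv, hv0⟩ := Submodule.exists_mem_ne_zero_of_ne_bot hker
  have hvker : ∀ k : Fin q, ∑ i, c (k * d) i * v i = 0 := by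
    intro k
    have := congrFun (LinearMap.mem_ker.mp hv) k
    change (M.mulVec v) k = (0 : Fin q → ℝ) k at this
    simpa [Matrix.mulVecLin, Matrix.mulVec, dotProduct, hM] using this
  have hper : Function.Periodic c m := hc
  refine ⟨fun t => if d ∣ t then v else 0, fun _ => 0, ?_, ?_, ?_, ?_⟩
  · intro t
    have : d ∣ t + p ↔ d ∣ t := by
      rw [Nat.add_comm]; exact Nat.dvd_add_right hdp
    simp [this]
  · intro t; rfl
  · intro h
    have h0 := congrFun h 0
    simp at h0
    exact hv0 h0
  · intro t
    by_cases ht : d ∣ t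
    · have hct : c t = c (t % m) := (hper.map_mod_nat t).symm
      have hdt : d ∣ t % m := (Nat.dvd_mod_iff hdm).mpr ht
      have hk : t % m / d < q := Nat.div_lt_div_of_lt_of_dvd hdm (Nat.mod_lt t hm)
      have key := hvker ⟨t % m / d, hk⟩
      have ht' : c t = c ((⟨t % m / d, hk⟩ : Fin q) * d) := by
        rw [hct]; exact congrArg c (Nat.div_mul_cancel hdt).symm
      simp only [if_pos ht, Pi.zero_apply, mul_zero, Finset.sum_const_zero]
      rw [ht']; exact key
    · simp [ht]
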